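/- Let u ∈ (0, 1/2), let I be a nonempty finite index set, and let p_i ∈ [u, 1/2] for all i ∈ I. Then √(Σ_{i∈I} p_i³(1−p_i)) / (Σ_{i∈I} p_i(1−p_i)) ≤ (1 + 2u + 4u² − 8u³) / √(16·|I|·u·(1 − u − 4u² + 4u³)). -/

import Mathlib

open Finset

/-- Pointwise tangent-line bound: for `p ∈ [u, 1/2]`,
`(1/2-u)² p³(1-p) ≤ -u(1-u-4u²+4u³)/16 + (1/16-u³+u⁴) p(1-p)`. -/
lemma aux_point_bound (u p : ℝ) (hu0 : 0 < u) (hu2 : u < 1/2)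
    (hup : u ≤ p) (hp2 : p ≤ 1/2) :
    (1/2 - u)^2 * (p^3 * (1 - p)) ≤
      -(u * (1 - u - 4*u^2 + 4*u^3)) / 16 + (1/16 - u^3 + u^4) * (p * (1 - p)) := by
  have h1 : 0 ≤ p - u := by linarith
  have h2 : 0 ≤ 1/2 - p := by linarith
  have hcube : 0 ≤ 1/8 + u/4 + u^2/2 - u^3 := by
    nlinarith [mul_nonneg (sq_nonneg u) (by linarith : (0:ℝ) ≤ 1/2 - u)]
  have hN : 0 ≤ 1/16 - u^3 + u^4 := by
    nlinarith [mul_nonneg (by linarith : (0:ℝ) ≤ 1/2 - u) hcube]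
  have hQ : p^2 + (u - 1/2)*p + (u^2 - u/2 - 1/4) ≤ 0 := by
    nlinarith [mul_nonneg h1 h2, mul_nonneg (by linarith : (0:ℝ) ≤ u + 1/6) h2,
      mul_nonneg (by linarith : (0:ℝ) ≤ 1/2 + u) h1]
  have hR : 0 ≤ (1/16 - u^3 + u^4)
      - (1/2 - u)^2 * (p^2 + (u - 1/2)*p + (u^2 - u/2 - 1/4)) := by
    nlinarith [mul_nonpos_of_nonneg_of_nonpos (sq_nonneg (1/2 - u)) hQ]
  nlinarith [mul_nonneg (mul_nonneg h1 h2) hR]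

/-- Algebraic core of the argument, with the sums abstracted as `S` and `T`. -/
lemma aux_core (u n S T : ℝ) (hu0 : 0 < u) (hu2 : u < 1/2) (hn : 1 ≤ n)
    (hT0 : 0 ≤ T) (hSlb : n * (u * (1 - u)) ≤ S)
    (hsum : (1/2 - u)^2 * T ≤
      n * (-(u * (1 - u - 4*u^2 + 4*u^3)) / 16) + (1/16 - u^3 + u^4) * S) :
    Real.sqrt T / S ≤ (1 + 2*u + 4*u^2 - 8*u^3) /
      Real.sqrt (16 * n * u * (1 - u - 4*u^2 + 4*u^3)) := by
  have hEpos : 0 < u * (1 - u - 4*u^2 + 4*u^3) := by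
    have h := mul_pos hu0 (mul_pos (by linarith : (0:ℝ) < 1 - u)
      (mul_pos (by linarith : (0:ℝ) < 1 - 2*u) (by linarith : (0:ℝ) < 1 + 2*u)))
    nlinarith [h]
  have hC : 0 < 1 + 2*u + 4*u^2 - 8*u^3 := by
    nlinarith [mul_nonneg (sq_nonneg u) (by linarith : (0:ℝ) ≤ 1 - 2*u)]
  have hq0 : 0 < u * (1 - u) := mul_pos hu0 (by linarith)
  have hSpos : 0 < S := lt_of_lt_of_le (mul_pos (by linarith) hq0) hSlb
  have hDpos : 0 < 16 * n * u * (1 - u - 4*u^2 + 4*u^3) := by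
    nlinarith [mul_pos (by linarith : (0:ℝ) < 16 * n) hEpos]
  have h6 : (0:ℝ) < (1/2 - u)^2 := pow_pos (by linarith) 2
  have hkey : 16 * n * u * (1 - u - 4*u^2 + 4*u^3) * T
      ≤ (1 + 2*u + 4*u^2 - 8*u^3)^2 * S^2 := by
    have h3 : 16 * n * u * (1 - u - 4*u^2 + 4*u^3) * ((1/2 - u)^2 * T)
        ≤ 16 * n * u * (1 - u - 4*u^2 + 4*u^3) *
          (n * (-(u * (1 - u - 4*u^2 + 4*u^3)) / 16) + (1/16 - u^3 + u^4) * S) :=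
      mul_le_mul_of_nonneg_left hsum (le_of_lt hDpos)
    have h4 : 16 * n * u * (1 - u - 4*u^2 + 4*u^3) *
          (n * (-(u * (1 - u - 4*u^2 + 4*u^3)) / 16) + (1/16 - u^3 + u^4) * S)
        ≤ (1/2 - u)^2 * ((1 + 2*u + 4*u^2 - 8*u^3)^2 * S^2) := by
      have hsq := sq_nonneg (8*(1/16 - u^3 + u^4)*S - u*(1 - u - 4*u^2 + 4*u^3)*n)
      nlinarith [hsq]
    have h5 : (1/2 - u)^2 * (16 * n * u * (1 - u - 4*u^2 + 4*u^3) * T)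
        ≤ (1/2 - u)^2 * ((1 + 2*u + 4*u^2 - 8*u^3)^2 * S^2) := by linarith [h3, h4]
    exact le_of_mul_le_mul_left h5 h6
  have hsqrtD : 0 < Real.sqrt (16 * n * u * (1 - u - 4*u^2 + 4*u^3)) :=
    Real.sqrt_pos.mpr hDpos
  rw [div_le_div_iff₀ hSpos hsqrtD]
  rw [← Real.sqrt_mul hT0]
  have h7 : T * (16 * n * u * (1 - u - 4*u^2 + 4*u^3))
      ≤ ((1 + 2*u + 4*u^2 - 8*u^3) * S)^2 := by linarith [hkey]
  calc Real.sqrt (T * (16 * n * u * (1 - u - 4*u^2 + 4*u^3)))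
      ≤ Real.sqrt (((1 + 2*u + 4*u^2 - 8*u^3) * S)^2) := Real.sqrt_le_sqrt h7
    _ = (1 + 2*u + 4*u^2 - 8*u^3) * S :=
        Real.sqrt_sq (le_of_lt (mul_pos hC hSpos))

/-- For probabilities `pᵢ ∈ [u, 1/2]`, the ratio of `√(∑ pᵢ³(1−pᵢ))` to `∑ pᵢ(1−pᵢ)` is at
most `(1 + 2u + 4u² − 8u³)/√(16·|I|·u·(1 − u − 4u² + 4u³))`. -/
theorem sqrt_sum_cube_div_sum_var_le
    {ι : Type*} (I : Finset ι) (hI : I.Nonempty) (u : ℝ)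
    (hu : u ∈ Set.Ioo (0 : ℝ) (1 / 2))
    (p : ι → ℝ) (hp : ∀ i ∈ I, p i ∈ Set.Icc u (1 / 2)) :
    Real.sqrt (∑ i ∈ I, (p i) ^ 3 * (1 - p i)) / (∑ i ∈ I, p i * (1 - p i)) ≤
      (1 + 2 * u + 4 * u ^ 2 - 8 * u ^ 3) /
        Real.sqrt (16 * (I.card : ℝ) * u * (1 - u - 4 * u ^ 2 + 4 * u ^ 3)) := by
  obtain ⟨hu0, hu2⟩ := hu
  have hu2' : u < 1/2 := hu2
  have hn1 : (1:ℝ) ≤ (I.card : ℝ) := by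
    exact_mod_cast Nat.one_le_iff_ne_zero.mpr (Finset.card_ne_zero_of_mem hI.choose_spec)
  have hT0 : 0 ≤ ∑ i ∈ I, (p i) ^ 3 * (1 - p i) := by
    apply Finset.sum_nonneg
    intro i hi
    obtain ⟨ha, hb⟩ := hp i hi
    have h1 : 0 < p i := lt_of_lt_of_le hu0 ha
    exact mul_nonneg (le_of_lt (pow_pos h1 3)) (by linarith)
  have hSlb : (I.card : ℝ) * (u * (1 - u)) ≤ ∑ i ∈ I, p i * (1 - p i) := by
    calc (I.card : ℝ) * (u * (1 - u)) = ∑ _i ∈ I, u * (1 - u) := by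
          rw [Finset.sum_const, nsmul_eq_mul]
      _ ≤ ∑ i ∈ I, p i * (1 - p i) := by
          apply Finset.sum_le_sum
          intro i hi
          obtain ⟨ha, hb⟩ := hp i hi
          nlinarith
  have hsum : (1/2 - u)^2 * (∑ i ∈ I, (p i) ^ 3 * (1 - p i)) ≤
      (I.card : ℝ) * (-(u * (1 - u - 4*u^2 + 4*u^3)) / 16)
        + (1/16 - u^3 + u^4) * (∑ i ∈ I, p i * (1 - p i)) := by
    rw [Finset.mul_sum, Finset.mul_sum]
    have hconst : (I.card : ℝ) * (-(u * (1 - u - 4*u^2 + 4*u^3)) / 16)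
        = ∑ _i ∈ I, (-(u * (1 - u - 4*u^2 + 4*u^3)) / 16) := by
      rw [Finset.sum_const, nsmul_eq_mul]
    rw [hconst, ← Finset.sum_add_distrib]
    apply Finset.sum_le_sum
    intro i hi
    obtain ⟨ha, hb⟩ := hp i hi
    exact aux_point_bound u (p i) hu0 hu2' ha hb
  have hmain := aux_core u (I.card : ℝ) (∑ i ∈ I, p i * (1 - p i))
    (∑ i ∈ I, (p i) ^ 3 * (1 - p i)) hu0 hu2' hn1 hT0 hSlb hsum
  exact hmain
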